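/- If D is an arc-locally in-semicomplete digraph, then D contains no induced non-oriented odd cycle of length at least five; that is, there is no set of at least five (an odd number of) vertices of D inducing a subdigraph that is not a directed cycle but whose underlying graph is a cycle. -/
import Mathlib


variable {V : Type*}

/-- `u` and `v` are adjacent in the digraph with arc relation `A`. -/
def DAdj (A : V → V → Prop) (u v : V) : Prop := A u v ∨ A v u

/-- `A` is arc-locally in-semicomplete: for any four distinct vertices
`v1,v2,v3,v4` with `v1→v2`, `v2→v3`, `v4→v3`, the vertices `v1,v4` are adjacent. -/
def ArcLocallyIn (A : V → V → Prop) : Prop :=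
  ∀ v1 v2 v3 v4 : V, v1 ≠ v2 → v1 ≠ v3 → v1 ≠ v4 → v2 ≠ v3 → v2 ≠ v4 → v3 ≠ v4 →
    A v1 v2 → A v2 v3 → A v4 v3 → DAdj A v1 v4

/-- `A` is arc-locally out-semicomplete: for any four distinct vertices
`v1,v2,v3,v4` with `v2→v1`, `v2→v3`, `v3→v4`, the vertices `v1,v4` are adjacent. -/
def ArcLocallyOut (A : V → V → Prop) : Prop :=
  ∀ v1 v2 v3 v4 : V, v1 ≠ v2 → v1 ≠ v3 → v1 ≠ v4 → v2 ≠ v3 → v2 ≠ v4 → v3 ≠ v4 →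
    A v2 v1 → A v2 v3 → A v3 v4 → DAdj A v1 v4

/-- The underlying simple graph of the digraph `A`. -/
def Underlying (A : V → V → Prop) : SimpleGraph V := SimpleGraph.fromRel A

/-- A simple graph is perfect if every induced subgraph has chromatic number
equal to its clique number. -/
def GraphPerfect (G : SimpleGraph V) : Prop :=
  ∀ S : Set V, (G.induce S).chromaticNumber = ((G.induce S).cliqueNum : ℕ∞)

/-- A digraph is diperfect if its underlying graph is perfect. -/
def Diperfect (A : V → V → Prop) : Prop := GraphPerfect (Underlying A)

/-- The pairs of consecutive arcs `x ∈ S, y ∈ S, x→y` restricted to `S`. -/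
def ArcOn (A : V → V → Prop) (S : Set V) (x y : V) : Prop := x ∈ S ∧ y ∈ S ∧ A x y

/-- The induced subdigraph on `S` is strong. -/
def StrongOn (A : V → V → Prop) (S : Set V) : Prop :=
  ∀ u ∈ S, ∀ v ∈ S, Relation.ReflTransGen (ArcOn A S) u v

/-- `S` is (the vertex set of) a strong component: a maximal set inducing a
strong subdigraph. -/
def IsStrongComponent (A : V → V → Prop) (S : Set V) : Prop :=
  S.Nonempty ∧ StrongOn A S ∧ ∀ T : Set V, S ⊆ T → StrongOn A T → T ⊆ S

/-- The strong component `S` is initial: no outside vertex dominates a vertex of `S`. -/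
def IsInitial (A : V → V → Prop) (S : Set V) : Prop :=
  ∀ v, v ∉ S → ∀ u ∈ S, ¬ A v u

/-- The digraph is strong. -/
def IsStrong (A : V → V → Prop) : Prop := ∀ u v : V, Relation.ReflTransGen A u v

/-- There is a directed path from `u` to `v`. -/
def Reach (A : V → V → Prop) (u v : V) : Prop := Relation.ReflTransGen A u v

/-- The induced subdigraph on `S` is semicomplete. -/
def SemicompleteOn (A : V → V → Prop) (S : Set V) : Prop :=
  ∀ u ∈ S, ∀ v ∈ S, u ≠ v → DAdj A u v

/-- The induced subdigraph on `S` is bipartite (its underlying graph is 2-colorable). -/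
def BipartiteOn (A : V → V → Prop) (S : Set V) : Prop :=
  ∃ T : Set V, ∀ u ∈ S, ∀ v ∈ S, DAdj A u v →
    ((u ∈ T ∧ v ∉ T) ∨ (u ∉ T ∧ v ∈ T))

/-- The induced subdigraph on `S` is connected (in the underlying graph). -/
def ConnOn (A : V → V → Prop) (S : Set V) : Prop :=
  ∀ u ∈ S, ∀ v ∈ S,
    Relation.ReflTransGen (fun x y => x ∈ S ∧ y ∈ S ∧ DAdj A x y) u v

/-- The digraph is connected. -/
def IsConnected' (A : V → V → Prop) : Prop := ConnOn A Set.univ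

/-- `D` has a clique cut: a set `B` inducing a semicomplete subdigraph whose
removal disconnects the digraph. -/
def HasCliqueCut (A : V → V → Prop) : Prop :=
  ∃ B : Set V, SemicompleteOn A B ∧ ¬ ConnOn A Bᶜ

/-- The induced subdigraph on `S` is an extended cycle of length `k`:
`S` is partitioned into `k` nonempty (necessarily stable) sets `X 0, …, X (k-1)`
and the arcs between vertices of `S` are exactly those from `X i` to `X (i+1)`
(indices modulo `k`). -/
def IsExtendedCycleOn (A : V → V → Prop) (S : Set V) (k : ℕ) : Prop :=
  2 ≤ k ∧ ∃ X : ZMod k → Set V,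
    (∀ i, (X i).Nonempty) ∧
    (∀ i j, i ≠ j → Disjoint (X i) (X j)) ∧
    (⋃ i, X i) = S ∧
    (∀ u ∈ S, ∀ v ∈ S, (A u v ↔ ∃ i, u ∈ X i ∧ v ∈ X (i + 1)))

/-- The induced subdigraph on `S` is an odd extended cycle of length at least five. -/
def IsOddExtCycle5On (A : V → V → Prop) (S : Set V) : Prop :=
  ∃ k : ℕ, Odd k ∧ 5 ≤ k ∧ IsExtendedCycleOn A S k

/-- An arc-locally in-semicomplete digraph contains no induced
non-oriented odd cycle of length at least five: there is no odd `n ≥ 5` and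
injective `c : ZMod n → V` whose image induces a cycle in the underlying graph
(adjacency exactly between consecutive vertices) but whose induced subdigraph
is not a directed cycle (in either orientation). -/
theorem stmt_0 {V : Type*} [Fintype V] (A : V → V → Prop) (hirr : Irreflexive A)
    (hD : ArcLocallyIn A) :
    ¬ ∃ (n : ℕ) (c : ZMod n → V), Odd n ∧ 5 ≤ n ∧ Function.Injective c ∧
      (∀ i j : ZMod n, i ≠ j →
        (DAdj A (c i) (c j) ↔ (j = i + 1 ∨ i = j + 1))) ∧
      ¬ (∀ i : ZMod n, A (c i) (c (i + 1)) ∧ ¬ A (c (i + 1)) (c i)) ∧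
      ¬ (∀ i : ZMod n, A (c (i + 1)) (c i) ∧ ¬ A (c i) (c (i + 1))) := by
  rintro ⟨n, c, hodd, h5, hinj, hadj, hnf, hnb⟩
  haveI : NeZero n := ⟨by omega⟩
  have hz : ∀ k : ℕ, 0 < k → k < n → (k : ZMod n) ≠ 0 := by
    intro k hk1 hk2 h
    rw [ZMod.natCast_eq_zero_iff] at h
    have := Nat.le_of_dvd hk1 h
    omega
  have h1 : (1 : ZMod n) ≠ 0 := by
    have := hz 1 (by omega) (by omega); simpa using this
  have h2 : (2 : ZMod n) ≠ 0 := by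
    have := hz 2 (by omega) (by omega); simpa using this
  have h3 : (3 : ZMod n) ≠ 0 := by
    have := hz 3 (by omega) (by omega); simpa using this
  have h4 : (4 : ZMod n) ≠ 0 := by
    have := hz 4 (by omega) (by omega); simpa using this
  have hZ : ∀ a b : ZMod n, a ≠ b → c a ≠ c b := fun a b hab h => hab (hinj h)
  -- no adjacency at distance 3
  have hfar : ∀ i : ZMod n, ¬ DAdj A (c i) (c (i + 3)) := by
    intro i h
    have hne : i ≠ i + 3 := fun h' => h3 (by linear_combination -h')
    rcases (hadj i (i + 3) hne).1 h with h' | h'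
    · exact h2 (by linear_combination h')
    · exact h4 (by linear_combination -h')
  -- adjacency on consecutive vertices
  have P : ∀ i : ZMod n, A (c i) (c (i + 1)) ∨ A (c (i + 1)) (c i) := by
    intro i
    have hne : i ≠ i + 1 := fun h' => h1 (by linear_combination -h')
    exact (hadj i (i + 1) hne).2 (Or.inl rfl)
  -- key forbidden patterns
  have Q : ∀ i : ZMod n, A (c i) (c (i + 1)) → A (c (i + 1)) (c (i + 2)) →
      A (c (i + 3)) (c (i + 2)) → False := by
    intro i a1 a2 a3
    have := hD (c i) (c (i + 1)) (c (i + 2)) (c (i + 3))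
      (hZ i (i + 1) (fun h' => h1 (by linear_combination -h')))
      (hZ i (i + 2) (fun h' => h2 (by linear_combination -h')))
      (hZ i (i + 3) (fun h' => h3 (by linear_combination -h')))
      (hZ (i + 1) (i + 2) (fun h' => h1 (by linear_combination -h')))
      (hZ (i + 1) (i + 3) (fun h' => h2 (by linear_combination -h')))
      (hZ (i + 2) (i + 3) (fun h' => h1 (by linear_combination -h')))
      a1 a2 a3
    exact hfar i this
  have R : ∀ i : ZMod n, A (c i) (c (i + 1)) → A (c (i + 2)) (c (i + 1)) →
      A (c (i + 3)) (c (i + 2)) → False := by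
    intro i a1 a2 a3
    have := hD (c (i + 3)) (c (i + 2)) (c (i + 1)) (c i)
      (hZ (i + 3) (i + 2) (fun h' => h1 (by linear_combination h')))
      (hZ (i + 3) (i + 1) (fun h' => h2 (by linear_combination h')))
      (hZ (i + 3) i (fun h' => h3 (by linear_combination h')))
      (hZ (i + 2) (i + 1) (fun h' => h1 (by linear_combination h')))
      (hZ (i + 2) i (fun h' => h2 (by linear_combination h')))
      (hZ (i + 1) i (fun h' => h1 (by linear_combination h')))
      a3 a2 a1
    exact hfar i this.symm
  -- backward arc propagates two steps back
  set b : ZMod n → Prop := fun i => A (c (i + 1)) (c i) with hb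
  have hprop : ∀ i : ZMod n, b (i + 2) → b i := by
    intro i hbi2
    rw [hb] at hbi2
    rw [show i + 2 + 1 = i + 3 from by ring] at hbi2
    by_contra hbi
    have hf : A (c i) (c (i + 1)) := (P i).resolve_right hbi
    rcases P (i + 1) with hf1 | hb1
    · rw [show i + 1 + 1 = i + 2 from by ring] at hf1
      exact Q i hf hf1 hbi2
    · rw [show i + 1 + 1 = i + 2 from by ring] at hb1
      exact R i hf hb1 hbi2
  have hiter : ∀ (k : ℕ) (i : ZMod n), b (i + 2 * (k : ZMod n)) → b i := by
    intro k
    induction k with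
    | zero => intro i h; simpa using h
    | succ m ih =>
        intro i h
        have e : i + 2 * ((m + 1 : ℕ) : ZMod n) = (i + 2 * (m : ZMod n)) + 2 := by
          push_cast; ring
        rw [e] at h
        exact ih i (hprop _ h)
  -- since n is odd, 2*k hits every residue
  have hsurj : ∀ x : ZMod n, ∃ k : ℕ, 2 * (k : ZMod n) = x := by
    intro x
    rcases Nat.even_or_odd x.val with he | ho
    · obtain ⟨t, ht⟩ := he
      refine ⟨x.val / 2, ?_⟩
      have e : 2 * (x.val / 2) = x.val := by omega
      calc 2 * ((x.val / 2 : ℕ) : ZMod n) = ((2 * (x.val / 2) : ℕ) : ZMod n) := by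
            push_cast; ring
        _ = ((x.val : ℕ) : ZMod n) := by rw [e]
        _ = x := ZMod.natCast_zmod_val x
    · obtain ⟨m, hm⟩ := hodd
      obtain ⟨s, hs⟩ := ho
      refine ⟨(x.val + n) / 2, ?_⟩
      have e : 2 * ((x.val + n) / 2) = x.val + n := by omega
      calc 2 * (((x.val + n) / 2 : ℕ) : ZMod n) = ((2 * ((x.val + n) / 2) : ℕ) : ZMod n) := by
            push_cast; ring
        _ = ((x.val + n : ℕ) : ZMod n) := by rw [e]
        _ = x := by
            rw [Nat.cast_add, ZMod.natCast_self, ZMod.natCast_zmod_val, add_zero]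
  have hall : (∃ i, b i) → ∀ j, b j := by
    rintro ⟨i, hi⟩ j
    obtain ⟨k, hk⟩ := hsurj (i - j)
    apply hiter k j
    have e : j + 2 * (k : ZMod n) = i := by rw [hk]; ring
    rwa [e]
  by_cases hB : ∃ i, b i
  · have hallb := hall hB
    by_cases hF : ∃ j, A (c j) (c (j + 1))
    · obtain ⟨j, hfj⟩ := hF
      have hb1 : A (c (j + 2)) (c (j + 1)) := by
        have := hallb (j + 1)
        rw [hb] at this
        rwa [show j + 1 + 1 = j + 2 from by ring] at this
      have hb2 : A (c (j + 3)) (c (j + 2)) := by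
        have := hallb (j + 2)
        rw [hb] at this
        rwa [show j + 2 + 1 = j + 3 from by ring] at this
      exact R j hfj hb1 hb2
    · push_neg at hF
      exact hnb fun i => ⟨hallb i, hF i⟩
  · push_neg at hB
    exact hnf fun i => ⟨(P i).resolve_right (hB i), hB i⟩
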